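/- Let (X, L) be a random vector with values in ℝ × [0,∞) whose law has density h(x,l) = (1/√(2π))·(|x|+l)·exp(−(|x|+l)²/2) with respect to Lebesgue measure on ℝ × [0,∞). Then for every bounded measurable function φ : ℝ → ℝ, E[φ(L)·|X|] = E[∫_0^L φ(x) dx]. -/

import Mathlib

open MeasureTheory ProbabilityTheory Real

open Set Filter

/-- The joint density of `(B₁, L₁)`. -/
noncomputable def jointDensity (x l : ℝ) : ℝ :=
  (1 / Real.sqrt (2 * π)) * (|x| + l) * Real.exp (-(|x| + l) ^ 2 / 2)

lemma key_bound {a b : ℝ} (ha : 0 ≤ a) (hb : 0 ≤ b) :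
    (a + b) ^ 2 * Real.exp (-(a + b) ^ 2 / 2) ≤
      4 * (Real.exp (-a ^ 2 / 4) * Real.exp (-b ^ 2 / 4)) := by
  have h2 : (a + b) ^ 2 * Real.exp (-(a + b) ^ 2 / 4) ≤ 4 := by
    have h := Real.add_one_le_exp ((a + b) ^ 2 / 4)
    have hpos := Real.exp_pos (-(a + b) ^ 2 / 4)
    have hmul : Real.exp ((a + b) ^ 2 / 4) * Real.exp (-(a + b) ^ 2 / 4) = 1 := by
      rw [← Real.exp_add]; ring_nf; exact Real.exp_zero
    nlinarith [sq_nonneg (a + b)]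
  have h3 : Real.exp (-(a + b) ^ 2 / 4) ≤ Real.exp (-a ^ 2 / 4) * Real.exp (-b ^ 2 / 4) := by
    rw [← Real.exp_add]
    apply Real.exp_le_exp.2
    nlinarith [mul_nonneg ha hb]
  calc (a + b) ^ 2 * Real.exp (-(a + b) ^ 2 / 2)
      = ((a + b) ^ 2 * Real.exp (-(a + b) ^ 2 / 4)) * Real.exp (-(a + b) ^ 2 / 4) := by
        rw [mul_assoc, ← Real.exp_add]; ring_nf
    _ ≤ 4 * Real.exp (-(a + b) ^ 2 / 4) := by
        apply mul_le_mul_of_nonneg_right h2 (Real.exp_pos _).le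
    _ ≤ 4 * (Real.exp (-a ^ 2 / 4) * Real.exp (-b ^ 2 / 4)) := by linarith

lemma integrable_gauss4 : Integrable (fun x : ℝ => Real.exp (-x ^ 2 / 4)) := by
  have : (fun x : ℝ => Real.exp (-x ^ 2 / 4)) = fun x => Real.exp (-(4⁻¹ : ℝ) * x ^ 2) := by
    funext x; congr 1; ring
  rw [this]; exact integrable_exp_neg_mul_sq (by norm_num)

lemma integrable_dom : Integrable (fun p : ℝ × ℝ => Real.exp (-p.1 ^ 2 / 4) * Real.exp (-p.2 ^ 2 / 4)) := by
  rw [MeasureTheory.Measure.volume_eq_prod]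
  exact integrable_gauss4.mul_prod integrable_gauss4

lemma tendsto_gauss4 : Tendsto (fun x : ℝ => Real.exp (-x ^ 2 / 4)) atTop (nhds 0) := by
  apply Real.tendsto_exp_atBot.comp
  have h : Tendsto (fun x : ℝ => x ^ 2 / 4) atTop atTop :=
    (tendsto_pow_atTop two_ne_zero).atTop_div_const (by norm_num)
  have : (fun x : ℝ => -x ^ 2 / 4) = fun x => -(x ^ 2 / 4) := by funext x; ring
  rw [this]
  exact tendsto_neg_atBot_iff.mpr h

lemma tendsto_exp_shift (l : ℝ) :
    Tendsto (fun x : ℝ => Real.exp (-(x + l) ^ 2 / 2)) atTop (nhds 0) := by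
  apply Real.tendsto_exp_atBot.comp
  have h : Tendsto (fun x : ℝ => (x + l) ^ 2 / 2) atTop atTop :=
    ((tendsto_pow_atTop two_ne_zero).comp (tendsto_atTop_add_const_right atTop l tendsto_id)).atTop_div_const (by norm_num)
  have : (fun x : ℝ => -(x + l) ^ 2 / 2) = fun x => -((x + l) ^ 2 / 2) := by funext x; ring
  rw [this]
  exact tendsto_neg_atBot_iff.mpr h

lemma integrableOn_exp_sh (l : ℝ) (hl : 0 ≤ l) :
    IntegrableOn (fun x : ℝ => Real.exp (-(x + l) ^ 2 / 2)) (Ioi 0) := by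
  apply Integrable.mono' (integrable_gauss4.restrict (s := Ioi 0))
  · exact (Real.continuous_exp.comp (by continuity)).aestronglyMeasurable
  · filter_upwards [ae_restrict_mem measurableSet_Ioi] with x hx
    rw [Real.norm_eq_abs, abs_of_pos (Real.exp_pos _)]
    apply Real.exp_le_exp.2
    have hx0 : 0 ≤ x := le_of_lt hx
    nlinarith

lemma integrableOn_mul_sh (l : ℝ) (hl : 0 ≤ l) :
    IntegrableOn (fun x : ℝ => x * ((x + l) * Real.exp (-(x + l) ^ 2 / 2))) (Ioi 0) := by
  apply Integrable.mono' ((integrable_gauss4.const_mul (4 * Real.exp (-l ^ 2 / 4))).restrict (s := Ioi 0))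
  · apply Continuous.aestronglyMeasurable; continuity
  · filter_upwards [ae_restrict_mem measurableSet_Ioi] with x hx
    have hx0 : 0 ≤ x := le_of_lt hx
    have hkey := key_bound hx0 hl
    rw [Real.norm_eq_abs, abs_of_nonneg (by positivity)]
    have hxle : x * ((x + l) * Real.exp (-(x + l) ^ 2 / 2)) ≤ (x + l) ^ 2 * Real.exp (-(x + l) ^ 2 / 2) := by
      have hE := Real.exp_pos (-(x + l) ^ 2 / 2)
      nlinarith [mul_nonneg (mul_nonneg hl (by linarith : (0:ℝ) ≤ x + l)) hE.le]
    calc x * ((x + l) * Real.exp (-(x + l) ^ 2 / 2)) ≤ (x + l) ^ 2 * Real.exp (-(x + l) ^ 2 / 2) := hxle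
      _ ≤ 4 * (Real.exp (-x ^ 2 / 4) * Real.exp (-l ^ 2 / 4)) := hkey
      _ = 4 * Real.exp (-l ^ 2 / 4) * Real.exp (-x ^ 2 / 4) := by ring

lemma integrableOn_lin_sh (l : ℝ) (hl : 0 ≤ l) :
    IntegrableOn (fun x : ℝ => (x + l) * Real.exp (-(x + l) ^ 2 / 2)) (Ioi 0) := by
  apply Integrable.mono' (((integrable_gauss4.const_mul (4 * Real.exp (-l ^ 2 / 4))).add
    (integrable_gauss4.const_mul (Real.exp (-l ^ 2 / 4)))).restrict (s := Ioi 0))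
  · apply Continuous.aestronglyMeasurable; continuity
  · filter_upwards [ae_restrict_mem measurableSet_Ioi] with x hx
    simp only [Pi.add_apply]
    have hx0 : 0 ≤ x := le_of_lt hx
    have hkey := key_bound hx0 hl
    rw [Real.norm_eq_abs, abs_of_nonneg (by positivity)]
    have h1 : Real.exp (-(x + l) ^ 2 / 2) ≤ Real.exp (-x ^ 2 / 4) * Real.exp (-l ^ 2 / 4) := by
      rw [← Real.exp_add]; apply Real.exp_le_exp.2; nlinarith [mul_nonneg hx0 hl]
    have hcase : x + l ≤ 1 ∨ 1 ≤ x + l := le_total _ 1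
    have hexp := Real.exp_pos (-(x + l) ^ 2 / 2)
    rcases hcase with h | h
    · nlinarith [mul_le_mul_of_nonneg_right h hexp.le, Real.exp_pos (-x ^ 2 / 4),
        Real.exp_pos (-l ^ 2 / 4), mul_pos (Real.exp_pos (-l ^ 2 / 4)) (Real.exp_pos (-x ^ 2 / 4))]
    · have hsq : x + l ≤ (x + l) ^ 2 := by nlinarith
      nlinarith [mul_le_mul_of_nonneg_right hsq hexp.le,
        mul_pos (Real.exp_pos (-l ^ 2 / 4)) (Real.exp_pos (-x ^ 2 / 4))]

-- derivative helpers
lemma hderiv_exp_sh (l x : ℝ) :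
    HasDerivAt (fun x : ℝ => Real.exp (-(x + l) ^ 2 / 2)) (Real.exp (-(x + l) ^ 2 / 2) * (-(x + l))) x := by
  have h1 : HasDerivAt (fun x : ℝ => -(x + l) ^ 2 / 2) (-(x + l)) x := by
    have h := (((hasDerivAt_id x).add_const l).pow 2).neg.div_const 2
    exact h.congr_deriv (by simp; ring)
  exact h1.exp

lemma int_lin_sh (l : ℝ) (hl : 0 ≤ l) :
    ∫ x in Ioi (0:ℝ), (x + l) * Real.exp (-(x + l) ^ 2 / 2) = Real.exp (-l ^ 2 / 2) := by
  have hderiv : ∀ x ∈ Ici (0:ℝ), HasDerivAt (fun x : ℝ => -Real.exp (-(x + l) ^ 2 / 2))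
      ((x + l) * Real.exp (-(x + l) ^ 2 / 2)) x := by
    intro x _
    have := (hderiv_exp_sh l x).neg
    exact this.congr_deriv (by ring)
  have htend : Tendsto (fun x : ℝ => -Real.exp (-(x + l) ^ 2 / 2)) atTop (nhds 0) := by
    have := (tendsto_exp_shift l).neg
    simpa using this
  have := integral_Ioi_of_hasDerivAt_of_tendsto' hderiv (integrableOn_lin_sh l hl) htend
  rw [this]; simp

lemma int_mul_eq_exp (l : ℝ) (hl : 0 ≤ l) :
    ∫ x in Ioi (0:ℝ), x * ((x + l) * Real.exp (-(x + l) ^ 2 / 2))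
      = ∫ x in Ioi (0:ℝ), Real.exp (-(x + l) ^ 2 / 2) := by
  have hderiv : ∀ x ∈ Ici (0:ℝ), HasDerivAt (fun x : ℝ => -x * Real.exp (-(x + l) ^ 2 / 2))
      (x * ((x + l) * Real.exp (-(x + l) ^ 2 / 2)) - Real.exp (-(x + l) ^ 2 / 2)) x := by
    intro x _
    have := ((hasDerivAt_id x).neg).mul (hderiv_exp_sh l x)
    exact this.congr_deriv (by simp only [Pi.neg_apply, id_eq]; ring)
  have hint : IntegrableOn (fun x : ℝ => x * ((x + l) * Real.exp (-(x + l) ^ 2 / 2))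
      - Real.exp (-(x + l) ^ 2 / 2)) (Ioi 0) :=
    (integrableOn_mul_sh l hl).sub (integrableOn_exp_sh l hl)
  have htend : Tendsto (fun x : ℝ => -x * Real.exp (-(x + l) ^ 2 / 2)) atTop (nhds 0) := by
    have hfe : (fun x : ℝ => -x * Real.exp (-(x + l) ^ 2 / 2))
        = fun x => -(x * Real.exp (-(x + l) ^ 2 / 2)) := by funext x; ring
    rw [hfe, show (0:ℝ) = -0 by ring]
    apply Tendsto.neg
    apply squeeze_zero' (g := fun x => 4 * Real.exp (-l ^ 2 / 4) * Real.exp (-x ^ 2 / 4))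
    · filter_upwards [eventually_ge_atTop (0:ℝ)] with x hx
      positivity
    · filter_upwards [eventually_ge_atTop (1:ℝ)] with x hx
      have hx0 : (0:ℝ) ≤ x := by linarith
      have hkey := key_bound hx0 hl
      have hexp := Real.exp_pos (-(x + l) ^ 2 / 2)
      have hxsq : x ≤ (x + l) ^ 2 := by nlinarith
      nlinarith [mul_le_mul_of_nonneg_right hxsq hexp.le]
    · rw [show (0:ℝ) = 4 * Real.exp (-l ^ 2 / 4) * 0 by ring]
      exact tendsto_gauss4.const_mul _
  have heq := integral_Ioi_of_hasDerivAt_of_tendsto' hderiv hint htend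
  rw [integral_sub (integrableOn_mul_sh l hl) (integrableOn_exp_sh l hl)] at heq
  norm_num at heq
  linarith

lemma int_exp_shift_eq (l : ℝ) :
    ∫ x in Ioi (0:ℝ), Real.exp (-(x + l) ^ 2 / 2) = ∫ y in Ioi l, Real.exp (-y ^ 2 / 2) := by
  have h := (measurePreserving_add_right volume l).setIntegral_preimage_emb
    (MeasurableEquiv.measurableEmbedding (MeasurableEquiv.addRight l))
    (fun y => Real.exp (-y ^ 2 / 2)) (Ioi l)
  have hpre : (fun x : ℝ => x + l) ⁻¹' Ioi l = Ioi 0 := by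
    ext x; simp [Set.mem_Ioi]
  rw [hpre] at h
  exact h

lemma core_swap (φ : ℝ → ℝ) (hφ : Measurable φ) (C : ℝ) (hC : ∀ x, |φ x| ≤ C) :
    ∫ l in Ioi (0:ℝ), (∫ u in (0:ℝ)..l, φ u) * Real.exp (-l ^ 2 / 2)
      = ∫ u in Ioi (0:ℝ), φ u * ∫ y in Ioi u, Real.exp (-y ^ 2 / 2) := by
  have hC0 : 0 ≤ C := le_trans (abs_nonneg _) (hC 0)
  have step1 : ∫ l in Ioi (0:ℝ), (∫ u in (0:ℝ)..l, φ u) * Real.exp (-l ^ 2 / 2)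
      = ∫ l in Ioi (0:ℝ), ∫ u in Ioi (0:ℝ), (Iic l).indicator φ u * Real.exp (-l ^ 2 / 2) := by
    apply setIntegral_congr_fun measurableSet_Ioi
    intro l hl
    dsimp only
    rw [integral_mul_const]
    congr 1
    rw [intervalIntegral.integral_of_le (le_of_lt hl),
      setIntegral_indicator measurableSet_Iic, Set.Ioi_inter_Iic]
  rw [step1]
  have hswap : ∫ l in Ioi (0:ℝ), ∫ u in Ioi (0:ℝ), (Iic l).indicator φ u * Real.exp (-l ^ 2 / 2)
      = ∫ u in Ioi (0:ℝ), ∫ l in Ioi (0:ℝ), (Iic l).indicator φ u * Real.exp (-l ^ 2 / 2) := by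
    apply integral_integral_swap
    have hfeq : (Function.uncurry fun l u => (Iic l).indicator φ u * Real.exp (-l ^ 2 / 2)) =
        fun p : ℝ × ℝ => (if p.2 ≤ p.1 then φ p.2 else 0) * Real.exp (-p.1 ^ 2 / 2) := by
      funext p; simp [Function.uncurry, Set.indicator_apply]
    rw [hfeq]
    have hmeas : Measurable (fun p : ℝ × ℝ => (if p.2 ≤ p.1 then φ p.2 else 0) * Real.exp (-p.1 ^ 2 / 2)) := by
      apply Measurable.mul
      · exact Measurable.ite (measurableSet_le measurable_snd measurable_fst)
          (hφ.comp measurable_snd) measurable_const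
      · exact (Real.continuous_exp.comp (by continuity)).measurable
    rw [Measure.prod_restrict]
    apply Integrable.mono' ((integrable_dom.const_mul C).restrict
      (s := Ioi (0:ℝ) ×ˢ Ioi (0:ℝ)))
    · exact hmeas.aestronglyMeasurable
    · filter_upwards [ae_restrict_mem (measurableSet_Ioi.prod measurableSet_Ioi)] with p hp
      obtain ⟨hp1, hp2⟩ := hp
      simp only [Real.norm_eq_abs, abs_mul]
      by_cases h : p.2 ≤ p.1
      · rw [if_pos h]
        have h1 : |φ p.2| ≤ C := hC p.2
        have h2 : |Real.exp (-p.1 ^ 2 / 2)| = Real.exp (-p.1 ^ 2 / 2) := abs_of_pos (Real.exp_pos _)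
        rw [h2]
        have h3 : Real.exp (-p.1 ^ 2 / 2) ≤ Real.exp (-p.1 ^ 2 / 4) * Real.exp (-p.2 ^ 2 / 4) := by
          rw [← Real.exp_add]
          apply Real.exp_le_exp.2
          have : (0:ℝ) < p.2 := hp2
          nlinarith [le_of_lt this, h]
        calc |φ p.2| * Real.exp (-p.1 ^ 2 / 2) ≤ C * Real.exp (-p.1 ^ 2 / 2) :=
              mul_le_mul_of_nonneg_right h1 (Real.exp_pos _).le
          _ ≤ C * (Real.exp (-p.1 ^ 2 / 4) * Real.exp (-p.2 ^ 2 / 4)) :=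
              mul_le_mul_of_nonneg_left h3 hC0
      · rw [if_neg h]
        simp only [abs_zero, zero_mul]
        positivity
  rw [hswap]
  apply setIntegral_congr_fun measurableSet_Ioi
  intro u hu
  dsimp only
  have hind : ∀ l : ℝ, (Iic l).indicator φ u * Real.exp (-l ^ 2 / 2)
      = (Ici u).indicator (fun l => φ u * Real.exp (-l ^ 2 / 2)) l := by
    intro l
    simp only [Set.indicator_apply, Set.mem_Iic, Set.mem_Ici]
    by_cases h : u ≤ l <;> simp [h]
  simp only [hind]
  rw [setIntegral_indicator measurableSet_Ici,
    Set.inter_eq_self_of_subset_right (Ici_subset_Ioi.mpr hu),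
    integral_Ici_eq_integral_Ioi, integral_const_mul]

noncomputable def rho (p : ℝ × ℝ) : ℝ := if 0 ≤ p.2 then jointDensity p.1 p.2 else 0

lemma rho_nonneg (p : ℝ × ℝ) : 0 ≤ rho p := by
  unfold rho
  split
  · unfold jointDensity
    apply mul_nonneg (mul_nonneg (by positivity) (add_nonneg (abs_nonneg _) (by assumption)))
      (Real.exp_pos _).le
  · exact le_refl 0

lemma rho_meas : Measurable rho := by
  have hjd : Measurable fun p : ℝ × ℝ => jointDensity p.1 p.2 := by
    unfold jointDensity
    apply Continuous.measurable
    continuity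
  exact Measurable.ite (measurableSet_le measurable_const measurable_snd) hjd measurable_const

lemma hA (φ : ℝ → ℝ) (l : ℝ) :
    (∫ x : ℝ, rho (x, l) * (φ l * |x|))
      = (Ici (0:ℝ)).indicator
          (fun l' => 2 * (1 / Real.sqrt (2 * π)) * (φ l' * ∫ y in Ioi l', Real.exp (-y ^ 2 / 2))) l := by
  by_cases hl : 0 ≤ l
  · have hfe : (fun x : ℝ => rho (x, l) * (φ l * |x|))
        = fun x : ℝ => (1 / Real.sqrt (2 * π) * φ l) *
            ((fun t : ℝ => t * ((t + l) * Real.exp (-(t + l) ^ 2 / 2))) |x|) := by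
      funext x
      simp only [rho, jointDensity, if_pos hl]
      ring
    rw [hfe, integral_const_mul,
      integral_comp_abs (f := fun t : ℝ => t * ((t + l) * Real.exp (-(t + l) ^ 2 / 2))),
      int_mul_eq_exp l hl, int_exp_shift_eq l,
      Set.indicator_of_mem (Set.mem_Ici.mpr hl)]
    ring
  · have hfe : (fun x : ℝ => rho (x, l) * (φ l * |x|)) = fun _ : ℝ => (0:ℝ) := by
      funext x
      simp [rho, if_neg hl]
    rw [hfe, integral_zero, Set.indicator_of_notMem (by simpa using hl)]

lemma hB (φ : ℝ → ℝ) (l : ℝ) :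
    (∫ x : ℝ, rho (x, l) * (∫ u in (0:ℝ)..l, φ u))
      = (Ici (0:ℝ)).indicator
          (fun l' => 2 * (1 / Real.sqrt (2 * π)) *
            ((∫ u in (0:ℝ)..l', φ u) * Real.exp (-l' ^ 2 / 2))) l := by
  by_cases hl : 0 ≤ l
  · have hfe : (fun x : ℝ => rho (x, l) * (∫ u in (0:ℝ)..l, φ u))
        = fun x : ℝ => (1 / Real.sqrt (2 * π) * (∫ u in (0:ℝ)..l, φ u)) *
            ((fun t : ℝ => (t + l) * Real.exp (-(t + l) ^ 2 / 2)) |x|) := by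
      funext x
      simp only [rho, jointDensity, if_pos hl]
      ring
    rw [hfe, integral_const_mul,
      integral_comp_abs (f := fun t : ℝ => (t + l) * Real.exp (-(t + l) ^ 2 / 2)),
      int_lin_sh l hl,
      Set.indicator_of_mem (Set.mem_Ici.mpr hl)]
    ring
  · have hfe : (fun x : ℝ => rho (x, l) * (∫ u in (0:ℝ)..l, φ u)) = fun _ : ℝ => (0:ℝ) := by
      funext x
      simp [rho, if_neg hl]
    rw [hfe, integral_zero, Set.indicator_of_notMem (by simpa using hl)]

/-- If `(X, L)` has density `h(x,l)` (supported on `ℝ × [0,∞)`) with respect to Lebesgue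
measure, then for every bounded measurable `φ`, `E[φ(L)·|X|] = E[∫_0^L φ(x) dx]`. -/
theorem balayage_identity {Ω : Type*} [MeasureSpace Ω]
    [IsProbabilityMeasure (ℙ : Measure Ω)]
    (X L : Ω → ℝ) (hX : Measurable X) (hL : Measurable L)
    (hlaw : Measure.map (fun ω => (X ω, L ω)) ℙ
      = (volume : Measure (ℝ × ℝ)).withDensity
          (fun p => ENNReal.ofReal (if 0 ≤ p.2 then jointDensity p.1 p.2 else 0)))
    (φ : ℝ → ℝ) (hφ : Measurable φ) (hφb : ∃ C, ∀ x, |φ x| ≤ C) :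
    ∫ ω, φ (L ω) * |X ω| ∂ℙ = ∫ ω, (∫ x in (0:ℝ)..(L ω), φ x) ∂ℙ := by
  obtain ⟨C, hC⟩ := hφb
  have hC0 : 0 ≤ C := le_trans (abs_nonneg _) (hC 0)
  -- transfer to the density
  have transfer : ∀ F : ℝ × ℝ → ℝ, Measurable F →
      ∫ ω, F (X ω, L ω) ∂ℙ = ∫ p : ℝ × ℝ, rho p * F p := by
    intro F hF
    rw [← integral_map (hX.prodMk hL).aemeasurable hF.aestronglyMeasurable]
    have hlaw' : Measure.map (fun ω => (X ω, L ω)) ℙ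
        = (volume : Measure (ℝ × ℝ)).withDensity
            (fun p => (((rho p).toNNReal : NNReal) : ENNReal)) := hlaw
    rw [hlaw', integral_withDensity_eq_integral_smul rho_meas.real_toNNReal F]
    congr 1
    funext p
    rw [NNReal.smul_def, Real.coe_toNNReal _ (rho_nonneg p), smul_eq_mul]
  -- measurability of test functions
  have hcont_prim : Continuous fun b : ℝ => ∫ u in (0:ℝ)..b, φ u := by
    apply intervalIntegral.continuous_primitive
    intro a b
    rw [intervalIntegrable_iff]
    apply Integrable.mono' (integrableOn_const (C := C) measure_Ioc_lt_top.ne)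
    · exact hφ.aestronglyMeasurable
    · exact ae_of_all _ fun x => by rw [Real.norm_eq_abs]; exact hC x
  have hF1meas : Measurable fun p : ℝ × ℝ => φ p.2 * |p.1| :=
    (hφ.comp measurable_snd).mul measurable_fst.abs
  have hF2meas : Measurable fun p : ℝ × ℝ => ∫ u in (0:ℝ)..p.2, φ u :=
    hcont_prim.measurable.comp measurable_snd
  -- integrability
  have key_int : ∀ w : ℝ × ℝ → ℝ, Measurable w →
      (∀ p : ℝ × ℝ, 0 ≤ p.2 → |w p| ≤ C * (|p.1| + p.2)) →
      Integrable (fun p : ℝ × ℝ => rho p * w p) := by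
    intro w hw hbound
    apply Integrable.mono' (integrable_dom.const_mul (4 * C * (1 / Real.sqrt (2 * π))))
    · exact (rho_meas.mul hw).aestronglyMeasurable
    · apply ae_of_all
      intro p
      have hgg : (0:ℝ) ≤ Real.exp (-p.1 ^ 2 / 4) * Real.exp (-p.2 ^ 2 / 4) := by positivity
      rcases le_or_gt 0 p.2 with h | h
      · have hkb := key_bound (abs_nonneg p.1) h
        rw [sq_abs] at hkb
        have hs : (0:ℝ) ≤ |p.1| + p.2 := add_nonneg (abs_nonneg _) h
        have hE := Real.exp_pos (-(|p.1| + p.2) ^ 2 / 2)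
        have e1 : |rho p * w p| = (1 / Real.sqrt (2 * π)) *
            ((|p.1| + p.2) * Real.exp (-(|p.1| + p.2) ^ 2 / 2) * |w p|) := by
          rw [abs_mul, abs_of_nonneg (rho_nonneg p)]
          simp only [rho, jointDensity, if_pos h]
          ring
        rw [Real.norm_eq_abs, e1]
        have hc : (0:ℝ) ≤ 1 / Real.sqrt (2 * π) := by positivity
        have b1 : (|p.1| + p.2) * Real.exp (-(|p.1| + p.2) ^ 2 / 2) * |w p|
            ≤ C * ((|p.1| + p.2) ^ 2 * Real.exp (-(|p.1| + p.2) ^ 2 / 2)) := by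
          have := mul_le_mul_of_nonneg_left (hbound p h) (mul_nonneg hs hE.le)
          nlinarith
        have b2 : C * ((|p.1| + p.2) ^ 2 * Real.exp (-(|p.1| + p.2) ^ 2 / 2))
            ≤ C * (4 * (Real.exp (-p.1 ^ 2 / 4) * Real.exp (-p.2 ^ 2 / 4))) :=
          mul_le_mul_of_nonneg_left hkb hC0
        calc (1 / Real.sqrt (2 * π)) *
            ((|p.1| + p.2) * Real.exp (-(|p.1| + p.2) ^ 2 / 2) * |w p|)
            ≤ (1 / Real.sqrt (2 * π)) * (C * (4 * (Real.exp (-p.1 ^ 2 / 4) * Real.exp (-p.2 ^ 2 / 4)))) :=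
              mul_le_mul_of_nonneg_left (le_trans b1 b2) hc
          _ = 4 * C * (1 / Real.sqrt (2 * π)) * (Real.exp (-p.1 ^ 2 / 4) * Real.exp (-p.2 ^ 2 / 4)) := by
              ring
      · have : rho p = 0 := by simp [rho, not_le.mpr h]
        rw [Real.norm_eq_abs, this, zero_mul, abs_zero]
        have : (0:ℝ) ≤ 4 * C * (1 / Real.sqrt (2 * π)) := by positivity
        exact mul_nonneg this hgg
  have hw1 : ∀ p : ℝ × ℝ, 0 ≤ p.2 → |φ p.2 * (|p.1|)| ≤ C * (|p.1| + p.2) := by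
    intro p hp
    rw [abs_mul, abs_abs]
    calc |φ p.2| * |p.1| ≤ C * |p.1| := mul_le_mul_of_nonneg_right (hC _) (abs_nonneg _)
      _ ≤ C * (|p.1| + p.2) := mul_le_mul_of_nonneg_left (by linarith) hC0
  have hw2 : ∀ p : ℝ × ℝ, 0 ≤ p.2 → |(∫ u in (0:ℝ)..p.2, φ u)| ≤ C * (|p.1| + p.2) := by
    intro p hp
    have h1 : ‖(∫ u in (0:ℝ)..p.2, φ u)‖ ≤ C * |p.2 - 0| :=
      intervalIntegral.norm_integral_le_of_norm_le_const
        (fun x _ => by rw [Real.norm_eq_abs]; exact hC x)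
    rw [Real.norm_eq_abs, sub_zero, abs_of_nonneg hp] at h1
    calc |(∫ u in (0:ℝ)..p.2, φ u)| ≤ C * p.2 := h1
      _ ≤ C * (|p.1| + p.2) := mul_le_mul_of_nonneg_left (by nlinarith [abs_nonneg p.1]) hC0
  have hint1 := key_int _ hF1meas hw1
  have hint2 := key_int _ hF2meas hw2
  rw [MeasureTheory.Measure.volume_eq_prod] at hint1 hint2
  have t1 : ∫ ω, φ (L ω) * |X ω| ∂ℙ = ∫ p : ℝ × ℝ, rho p * (φ p.2 * |p.1|) :=
    transfer _ hF1meas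
  have t2 : ∫ ω, (∫ x in (0:ℝ)..(L ω), φ x) ∂ℙ = ∫ p : ℝ × ℝ, rho p * (∫ u in (0:ℝ)..p.2, φ u) :=
    transfer _ hF2meas
  rw [t1, t2, MeasureTheory.Measure.volume_eq_prod,
    integral_prod_symm _ hint1, integral_prod_symm _ hint2]
  dsimp only
  simp only [hA φ, hB φ]
  rw [integral_indicator measurableSet_Ici, integral_indicator measurableSet_Ici,
    integral_Ici_eq_integral_Ioi, integral_Ici_eq_integral_Ioi,
    integral_const_mul, integral_const_mul]
  congr 1
  exact (core_swap φ hφ C hC).symm
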